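/- For G₂, with positive roots α₁, α₂, α₁+α₂, 2α₁+α₂, 3α₁+α₂, 3α₁+2α₂ where (α₁,α₁)=2/3, (α₂,α₂)=2, (α₁,α₂)=−1, the Weyl character formula for λ = n·(3α₁+2α₂) evaluated at xρ gives: [sinh((x/2)(n+1))/sinh(x/2)]·[sinh((x/2)(n+4/3))/sinh(2x/3)]·[sinh((x/2)(n+5/3))/sinh(5x/6)]·[sinh((x/2)(n+2))/sinh(x)]·[sinh((x/2)(2n+3))/sinh(3x/2)], and this agrees with the universal formula χₙ(x,−2,10/3,8/3) for all n ≥ 1 and all x where denominators are nonzero. -/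

import Mathlib

set_option maxHeartbeats 1000000


/-- Universal quantum dimension of the adjoint representation. -/
noncomputable def fAdj (x a b g : ℝ) : ℝ :=
  -(Real.sinh ((g + 2*b + 2*a) * x / 4) * Real.sinh ((2*g + b + 2*a) * x / 4) *
      Real.sinh ((2*g + 2*b + a) * x / 4)) /
    (Real.sinh (g * x / 4) * Real.sinh (b * x / 4) * Real.sinh (a * x / 4))

/-- Contribution B(x,n,α,β,γ) of the roots with unit scalar product with θ. -/
noncomputable def Bfac (x : ℝ) (n : ℕ) (a b g : ℝ) : ℝ :=
  ∏ j ∈ Finset.range n,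
    (Real.sinh ((g + 2*b - ((j:ℝ) + 1 - 3) * a) * x / 4) /
        Real.sinh ((g - ((j:ℝ) + 1 - 1) * a) * x / 4)) *
    (Real.sinh ((2*g + b - ((j:ℝ) + 1 - 3) * a) * x / 4) /
        Real.sinh ((b - ((j:ℝ) + 1 - 1) * a) * x / 4)) *
    (Real.sinh ((2*g + 2*b - ((j:ℝ) + 1 - 4) * a) * x / 4) /
        Real.sinh (-((j:ℝ) + 1) * a * x / 4))

lemma sne (x c : ℝ) (hx : x ≠ 0) (hc : c ≠ 0) : Real.sinh (c * x) ≠ 0 := by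
  rw [Real.sinh_ne_zero]; exact mul_ne_zero hc hx

lemma Bfac_eq (x : ℝ) (hx : x ≠ 0) (n : ℕ) :
    Bfac x n (-2) (10/3) (8/3) =
    (Real.sinh (x/2*((n:ℝ)+5/3)) * Real.sinh (x/2*((n:ℝ)+4/3)) *
     Real.sinh (x/2*((n:ℝ)+1)) * Real.sinh (x/2*((n:ℝ)+2))) /
    (Real.sinh (5*x/6) * Real.sinh (2*x/3) * Real.sinh (x/2) * Real.sinh x) := by
  induction n with
  | zero =>
      simp only [Bfac, Finset.range_zero, Finset.prod_empty, Nat.cast_zero]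
      rw [eq_div_iff (by positivity)]
      ring_nf
  | succ n ih =>
      rw [Bfac, Finset.prod_range_succ, ← Bfac, ih]
      have k1 : Real.sinh (x * (5/6) + x * (n:ℝ) * (1/2)) ≠ 0 := by
        have h : x * (5/6) + x * (n:ℝ) * (1/2) = (5/6 + (n:ℝ) * (1/2)) * x := by ring
        rw [h]; exact sne x _ hx (by positivity)
      have k2 : Real.sinh (x * (2/3) + x * (n:ℝ) * (1/2)) ≠ 0 := by
        have h : x * (2/3) + x * (n:ℝ) * (1/2) = (2/3 + (n:ℝ) * (1/2)) * x := by ring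
        rw [h]; exact sne x _ hx (by positivity)
      have k3 : Real.sinh (x * (1/2) + x * (n:ℝ) * (1/2)) ≠ 0 := by
        have h : x * (1/2) + x * (n:ℝ) * (1/2) = (1/2 + (n:ℝ) * (1/2)) * x := by ring
        rw [h]; exact sne x _ hx (by positivity)
      have k4 : Real.sinh (x + x * (n:ℝ) * (1/2)) ≠ 0 := by
        have h : x + x * (n:ℝ) * (1/2) = (1 + (n:ℝ) * (1/2)) * x := by ring
        rw [h]; exact sne x _ hx (by positivity)
      have d1 : Real.sinh (x * (5/6)) ≠ 0 := by
        have h : x * (5/6) = (5/6 : ℝ) * x := by ring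
        rw [h]; exact sne x _ hx (by norm_num)
      have d2 : Real.sinh (x * (2/3)) ≠ 0 := by
        have h : x * (2/3) = (2/3 : ℝ) * x := by ring
        rw [h]; exact sne x _ hx (by norm_num)
      have d3 : Real.sinh (x * (1/2)) ≠ 0 := by
        have h : x * (1/2) = (1/2 : ℝ) * x := by ring
        rw [h]; exact sne x _ hx (by norm_num)
      have d4 : Real.sinh x ≠ 0 := Real.sinh_ne_zero.mpr hx
      push_cast
      ring_nf
      simp only [← div_eq_mul_inv]
      field_simp

/-- Universal quantum dimension χₙ of the n-th Cartan power of the adjoint. -/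
noncomputable def chiAdj (x : ℝ) (n : ℕ) (a b g : ℝ) : ℝ :=
  (Real.sinh ((2*g + 2*b - (2*(n:ℝ) - 3) * a) * x / 4) /
      Real.sinh ((2*g + 2*b + 3*a) * x / 4)) * Bfac x n a b g

/-- For G₂ the Weyl character formula for λ = n·(3α₁+2α₂) on the Weyl line
agrees with the universal formula χₙ(x,−2,10/3,8/3). -/
theorem stmt_15 (n : ℕ) (hn : 1 ≤ n) (x : ℝ) (hx : x ≠ 0) :
    (Real.sinh (x/2 * ((n:ℝ) + 1)) / Real.sinh (x/2)) *
    (Real.sinh (x/2 * ((n:ℝ) + 4/3)) / Real.sinh (2*x/3)) *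
    (Real.sinh (x/2 * ((n:ℝ) + 5/3)) / Real.sinh (5*x/6)) *
    (Real.sinh (x/2 * ((n:ℝ) + 2)) / Real.sinh x) *
    (Real.sinh (x/2 * (2*(n:ℝ) + 3)) / Real.sinh (3*x/2)) =
      chiAdj x n (-2) (10/3) (8/3) := by
  rw [chiAdj, Bfac_eq x hx n]
  ring_nf
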